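/- Fix a positive integer m and let B = (b_1, ..., b_n) be a Ferrers board. For each column index i let ρ_i = b_i - ⌊b_i⌋_m, and partition the column indices into zones, where a zone z = [s, t] is a maximal interval of indices on which ⌊b_i⌋_m is constant; set ρ_z = Σ_{k=s}^{t} ρ_k. Then for every real number x, p_m(B, x) = Π_{i=1}^{n} c_i, where c_i = x + ⌊b_i⌋_m - (i-1)m + ρ_z if i is the last index of its zone z, and c_i = x + ⌊b_i⌋_m - (i-1)m otherwise. -/

import Mathlib

open scoped Classical

/-- The falling factorial `x↓ₖ = ∏_{i=0}^{k-1} (x - i)`. -/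
noncomputable def ffall (x : ℝ) (k : ℕ) : ℝ := ∏ i ∈ Finset.range k, (x - i)

/-- The `m`-falling factorial `x↓_{k,m} = ∏_{i=0}^{k-1} (x - m·i)`. -/
noncomputable def mfall (x : ℝ) (m k : ℕ) : ℝ := ∏ i ∈ Finset.range k, (x - m * i)

/-- The predicate that `b 0 ≤ b 1 ≤ ... ≤ b (n-1)`, i.e. the column heights of a
Ferrers board with `n` columns are weakly increasing.  (Column `i`, for `0 ≤ i < n`,
corresponds to column `i+1` = `b_{i+1}` of the paper.) -/
def FerrersMono (n : ℕ) (b : ℕ → ℕ) : Prop := ∀ i, i + 1 < n → b i ≤ b (i + 1)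

/-- The cells of the Ferrers board with column heights `b 0, …, b (n-1)`:
pairs `(i, j)` with `i < n` (a column, 0-indexed) and `1 ≤ j ≤ b i` (a row, 1-indexed). -/
def cellFinset (n : ℕ) (b : ℕ → ℕ) : Finset (ℕ × ℕ) :=
  (Finset.range n ×ˢ Finset.Icc 1 ((Finset.range n).sup b)).filter fun p => p.2 ≤ b p.1

/-- The file placements of `k` rooks on the board: `k` cells, no two in the same column. -/
def filePlacements (n : ℕ) (b : ℕ → ℕ) (k : ℕ) : Finset (Finset (ℕ × ℕ)) :=
  (cellFinset n b).powerset.filter fun P =>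
    P.card = k ∧ ∀ p ∈ P, ∀ q ∈ P, p ≠ q → p.1 ≠ q.1

/-- The `k`-th rook number `r_k(B)`: the number of placements of `k` cells of the board,
no two in the same row or column. -/
def rookNum (n : ℕ) (b : ℕ → ℕ) (k : ℕ) : ℕ :=
  ((cellFinset n b).powerset.filter fun P =>
    P.card = k ∧ ∀ p ∈ P, ∀ q ∈ P, p ≠ q → p.1 ≠ q.1 ∧ p.2 ≠ q.2).card

/-- The (0-indexed) level of the (1-indexed) row `j`: level `t` (0-indexed) consists of
rows `t*m + 1, …, t*m + m`. -/
def levelOf (m j : ℕ) : ℕ := (j - 1) / m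

/-- The `k`-th `m`-level rook number `r_{k,m}(B)`: the number of placements of `k` cells
of the board, no two in the same column or in the same level. -/
def mLevelRookNum (m n : ℕ) (b : ℕ → ℕ) (k : ℕ) : ℕ :=
  ((cellFinset n b).powerset.filter fun P =>
    P.card = k ∧ ∀ p ∈ P, ∀ q ∈ P, p ≠ q →
      p.1 ≠ q.1 ∧ levelOf m p.2 ≠ levelOf m q.2).card

/-- A placement has no two cells in the same level. -/
def NoLevelRepeat (m : ℕ) (F : Finset (ℕ × ℕ)) : Prop :=
  ∀ p ∈ F, ∀ q ∈ F, p ≠ q → levelOf m p.2 ≠ levelOf m q.2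

/-- The `m`-weight of a file placement `F`: the product over all rows `j` of
`1↓_{f_j, m}` where `f_j` is the number of cells of `F` in row `j`.  (Rows containing
no cell of `F` contribute `1↓_{0,m} = 1`, so it suffices to take the product over the
rows meeting `F`.) -/
noncomputable def wtm (m : ℕ) (F : Finset (ℕ × ℕ)) : ℝ :=
  ∏ j ∈ F.image Prod.snd, mfall 1 m ((F.filter fun p => p.2 = j).card)

/-- The `k`-th `m`-weighted file placement number `f_{k,m}(B)`. -/
noncomputable def fWeightNum (m n : ℕ) (b : ℕ → ℕ) (k : ℕ) : ℝ :=
  ∑ F ∈ filePlacements n b k, wtm m F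

/-- The `m`-floor of `b`: the largest multiple of `m` that is at most `b`. -/
def mfloor (m b : ℕ) : ℕ := m * (b / m)

/-- A singleton board (w.r.t. `m`): a Ferrers board such that whenever column `i` has
nonzero remainder mod `m`, the `m`-floor strictly increases at the next column. -/
def IsSingletonBoard (m n : ℕ) (b : ℕ → ℕ) : Prop :=
  FerrersMono n b ∧ ∀ i, i + 1 < n → b i - mfloor m (b i) ≠ 0 →
    mfloor m (b i) < mfloor m (b (i + 1))

/-- The cells of `F` lying in level `l` (0-indexed). -/
def rooksInLevel (m : ℕ) (F : Finset (ℕ × ℕ)) (l : ℕ) : Finset (ℕ × ℕ) :=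
  F.filter fun p => levelOf m p.2 = l

/-- `l` is the distinguished level of `F`: it contains at least two cells of `F`,
it has the fewest cells among all levels containing at least two cells of `F`,
and it is the lowest such level (any lower level with at least two cells of `F`
contains strictly more of them). -/
def DistinguishedLevel (m : ℕ) (F : Finset (ℕ × ℕ)) (l : ℕ) : Prop :=
  2 ≤ (rooksInLevel m F l).card ∧
  (∀ l', 2 ≤ (rooksInLevel m F l').card →
    (rooksInLevel m F l).card ≤ (rooksInLevel m F l').card) ∧
  (∀ l' < l, 2 ≤ (rooksInLevel m F l').card →
    (rooksInLevel m F l).card < (rooksInLevel m F l').card)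

/-- The class `𝓟(F₀)` of a file placement `F₀` with distinguished level `l`:
all file placements on the board with the same number of rooks as `F₀` which agree
with `F₀` outside level `l`, whose rooks in level `l` occupy the same columns as those
of `F₀`, and whose leftmost rook in level `l` occupies the same cell as the leftmost
rook of `F₀` in level `l`. -/
def classOf (m n : ℕ) (b : ℕ → ℕ) (l : ℕ) (F₀ : Finset (ℕ × ℕ)) :
    Finset (Finset (ℕ × ℕ)) :=
  (filePlacements n b F₀.card).filter fun F =>
    (F.filter fun p => levelOf m p.2 ≠ l) = (F₀.filter fun p => levelOf m p.2 ≠ l) ∧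
    (rooksInLevel m F l).image Prod.fst = (rooksInLevel m F₀ l).image Prod.fst ∧
    ∀ p ∈ rooksInLevel m F l, (∀ q ∈ rooksInLevel m F l, p.1 ≤ q.1) → p ∈ F₀


section Aux
open Finset

variable {m n k : ℕ} {b : ℕ → ℕ}

lemma mem_cellFinset {p : ℕ × ℕ} :
    p ∈ cellFinset n b ↔ p.1 < n ∧ 1 ≤ p.2 ∧ p.2 ≤ b p.1 := by
  unfold cellFinset
  simp only [mem_filter, mem_product, mem_range, mem_Icc]
  constructor
  · rintro ⟨⟨h1, h2, _⟩, h4⟩; exact ⟨h1, h2, h4⟩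
  · rintro ⟨h1, h2, h3⟩
    exact ⟨⟨h1, h2, le_trans h3 (le_sup (mem_range.2 h1))⟩, h3⟩

/-- The set of m-level rook placements. -/
noncomputable def mPl (m n : ℕ) (b : ℕ → ℕ) (k : ℕ) : Finset (Finset (ℕ × ℕ)) :=
  (cellFinset n b).powerset.filter fun P =>
    P.card = k ∧ ∀ p ∈ P, ∀ q ∈ P, p ≠ q →
      p.1 ≠ q.1 ∧ levelOf m p.2 ≠ levelOf m q.2

lemma mLevelRookNum_eq_card : mLevelRookNum m n b k = (mPl m n b k).card := rfl

lemma mem_mPl {P : Finset (ℕ × ℕ)} :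
    P ∈ mPl m n b k ↔ (∀ p ∈ P, p.1 < n ∧ 1 ≤ p.2 ∧ p.2 ≤ b p.1) ∧ P.card = k ∧
      ∀ p ∈ P, ∀ q ∈ P, p ≠ q → p.1 ≠ q.1 ∧ levelOf m p.2 ≠ levelOf m q.2 := by
  unfold mPl
  simp only [mem_filter, mem_powerset, Finset.subset_iff, mem_cellFinset]

lemma mPl_zero : mPl m n b 0 = {∅} := by
  ext P
  simp only [mem_mPl, mem_singleton, Finset.card_eq_zero]
  constructor
  · rintro ⟨-, h, -⟩; exact h
  · rintro rfl; simp

lemma mPl_congr {b' : ℕ → ℕ} (h : ∀ i < n, b i = b' i) : mPl m n b k = mPl m n b' k := by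
  ext P
  simp only [mem_mPl]
  constructor <;> rintro ⟨h1, h2, h3⟩ <;> refine ⟨fun p hp => ?_, h2, h3⟩
  · obtain ⟨a1, a2, a3⟩ := h1 p hp; exact ⟨a1, a2, by rwa [← h p.1 a1]⟩
  · obtain ⟨a1, a2, a3⟩ := h1 p hp; exact ⟨a1, a2, by rwa [h p.1 a1]⟩

lemma mPl_eq_empty_of_lt (h : n < k) : mPl m n b k = ∅ := by
  rw [Finset.eq_empty_iff_forall_notMem]
  intro P hP
  rw [mem_mPl] at hP
  obtain ⟨h1, h2, h3⟩ := hP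
  have hinj : Set.InjOn Prod.fst (P : Set (ℕ × ℕ)) := by
    intro p hp q hq hpq
    by_contra hne
    exact (h3 p hp q hq hne).1 hpq
  have himage : P.image Prod.fst ⊆ Finset.range n := by
    intro i hi
    obtain ⟨p, hp, rfl⟩ := Finset.mem_image.1 hi
    exact mem_range.2 (h1 p hp).1
  have := Finset.card_le_card himage
  rw [Finset.card_image_of_injOn hinj, h2, Finset.card_range] at this
  omega

lemma ferrers_le (hb : FerrersMono n b) {i j : ℕ} (hij : i ≤ j) (hj : j < n) :
    b i ≤ b j := by
  induction j with
  | zero => obtain rfl := Nat.le_zero.1 hij; exact le_rfl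
  | succ j ih =>
    rcases Nat.eq_or_lt_of_le hij with rfl | hlt
    · exact le_refl _
    · exact le_trans (ih (by omega) (by omega)) (hb j hj)

end Aux
section Aux2
open Finset

variable {m n k l j : ℕ} {b : ℕ → ℕ}

lemma mfloor_le {b : ℕ} : mfloor m b ≤ b := Nat.mul_div_le b m

lemma lt_mfloor_add (hm : 0 < m) {b : ℕ} : b < mfloor m b + m := by
  have h1 := Nat.div_add_mod b m
  have h2 := Nat.mod_lt b hm
  unfold mfloor; omega

lemma mfloor_mono {a b : ℕ} (h : a ≤ b) : mfloor m a ≤ mfloor m b :=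
  Nat.mul_le_mul_left m (Nat.div_le_div_right h)

lemma levelOf_eq_iff (hm : 0 < m) (hj : 1 ≤ j) :
    levelOf m j = l ↔ m * l + 1 ≤ j ∧ j ≤ m * l + m := by
  unfold levelOf
  constructor
  · rintro rfl
    have h1 := Nat.div_add_mod (j - 1) m
    have h2 := Nat.mod_lt (j - 1) hm
    omega
  · rintro ⟨h1, h2⟩
    have hsplit : j - 1 = m * l + (j - 1 - m * l) := by omega
    rw [hsplit, Nat.mul_add_div hm]
    have : (j - 1 - m * l) / m = 0 := Nat.div_eq_of_lt (by omega)
    omega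

lemma card_level_cells (hm : 0 < m) (h : ℕ) (l : ℕ) (hl : m * l < h) :
    ((Finset.Icc 1 h).filter fun j => levelOf m j = l).card
      = min (m * l + m) h - m * l := by
  have heq : ((Finset.Icc 1 h).filter fun j => levelOf m j = l)
      = Finset.Icc (m * l + 1) (min (m * l + m) h) := by
    ext j
    simp only [mem_filter, mem_Icc, le_min_iff, min_le_iff]
    constructor
    · rintro ⟨⟨hj1, hj2⟩, hj3⟩
      rw [levelOf_eq_iff hm hj1] at hj3
      omega
    · rintro ⟨hj1, hj2⟩
      have hj1' : 1 ≤ j := by omega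
      refine ⟨⟨hj1', by omega⟩, ?_⟩
      rw [levelOf_eq_iff hm hj1']
      omega
  rw [heq, Nat.card_Icc]
  omega

end Aux2
section Aux3
open Finset

variable {m n k : ℕ} {b : ℕ → ℕ}

lemma mul_succ_le_of_lt {m x y : ℕ} (h : m * x < m * y) : m * x + m ≤ m * y := by
  have hxy : x < y := Nat.lt_of_mul_lt_mul_left h
  have := Nat.mul_le_mul_left m (Nat.succ_le_of_lt hxy)
  rw [Nat.mul_succ] at this; omega

lemma mul_le_of_lt_add' {m x y : ℕ} (h : m * x < m * y + m) : m * x ≤ m * y := by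
  have h' : m * x < m * (y + 1) := by rw [Nat.mul_succ]; omega
  have hxy : x < y + 1 := Nat.lt_of_mul_lt_mul_left h'
  exact Nat.mul_le_mul_left m (by omega)

/-- The rows available for a rook in a new column of height `bn`, given the
placement `P` in earlier columns. -/
noncomputable def RR (m bn : ℕ) (P : Finset (ℕ × ℕ)) : Finset ℕ :=
  (Finset.Icc 1 bn).filter fun j => ∀ p ∈ P, levelOf m j ≠ levelOf m p.2

/-- The number of cells of a column of height `bn` killed by a rook at row `r`. -/
lemma card_kill (hm : 0 < m) {bn r : ℕ} (h1 : 1 ≤ r) (h2 : r ≤ bn) :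
    ((Finset.Icc 1 bn).filter fun j => levelOf m j = levelOf m r).card
      = if mfloor m bn < r then bn - mfloor m bn else m := by
  set l := levelOf m r with hl
  have hbound : m * l + 1 ≤ r ∧ r ≤ m * l + m := (levelOf_eq_iff hm h1).1 rfl
  have hlt : m * l < bn := by omega
  rw [card_level_cells hm bn l hlt]
  have hμ : mfloor m bn = m * (bn / m) := rfl
  have hμle : mfloor m bn ≤ bn := mfloor_le
  have hμlt : bn < mfloor m bn + m := lt_mfloor_add hm
  by_cases hc : mfloor m bn < r
  · -- l * m = μ
    have h3 : m * l ≤ m * (bn / m) := mul_le_of_lt_add' (by omega)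
    have h4 : m * (bn / m) ≤ m * l := mul_le_of_lt_add' (by omega)
    rw [if_pos hc]
    omega
  · -- m * l + m ≤ μ
    push_neg at hc
    have h3 : m * l < m * (bn / m) := by omega
    have h4 := mul_succ_le_of_lt h3
    rw [if_neg (by omega)]
    omega

lemma card_D_le_one (hm : 0 < m) {P : Finset (ℕ × ℕ)} {k : ℕ} (hP : P ∈ mPl m n b k)
    (hmono : ∀ p ∈ P, b p.1 ≤ b n) :
    (P.filter fun p => mfloor m (b n) < p.2).card ≤ 1 := by
  obtain ⟨hcell, hcard, hpair⟩ := mem_mPl.1 hP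
  apply Finset.card_le_one.2
  intro p hp q hq
  rw [mem_filter] at hp hq
  by_contra hne
  have hlev : ∀ r ∈ P, mfloor m (b n) < r.2 → levelOf m r.2 = b n / m := by
    intro r hr hrgt
    have h1 : 1 ≤ r.2 := (hcell r hr).2.1
    have h2 : r.2 ≤ b n := le_trans (hcell r hr).2.2 (hmono r hr)
    have hμ : mfloor m (b n) = m * (b n / m) := rfl
    have hμlt : b n < mfloor m (b n) + m := lt_mfloor_add hm
    rw [levelOf_eq_iff hm h1]
    omega
  have := (hpair p hp.1 q hq.1 hne).2
  rw [hlev p hp.1 hp.2, hlev q hq.1 hq.2] at this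
  exact this rfl

lemma card_RR (hm : 0 < m) {P : Finset (ℕ × ℕ)} {k : ℕ} (hP : P ∈ mPl m n b k)
    (hmono : ∀ p ∈ P, b p.1 ≤ b n) :
    ((RR m (b n) P).card : ℤ) = (b n : ℤ) - m * k
      + ((m : ℤ) - ((b n : ℤ) - (mfloor m (b n) : ℤ)))
        * ((P.filter fun p => mfloor m (b n) < p.2).card : ℤ) := by
  obtain ⟨hcell, hcard, hpair⟩ := mem_mPl.1 hP
  set B := b n with hB
  set μ := mfloor m B with hμ
  set K : Finset ℕ := P.biUnion
    (fun p => (Finset.Icc 1 B).filter fun j => levelOf m j = levelOf m p.2) with hK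
  have hRR : RR m B P = Finset.Icc 1 B \ K := by
    ext j
    simp only [RR, hK, mem_filter, mem_sdiff, mem_biUnion, mem_Icc]
    push_neg
    constructor
    · rintro ⟨hj, hall⟩
      exact ⟨hj, fun p hp _ => hall p hp⟩
    · rintro ⟨hj, hall⟩
      exact ⟨hj, fun p hp => hall p hp hj⟩
  have hKsub : K ⊆ Finset.Icc 1 B := by
    intro j hj
    rw [hK, mem_biUnion] at hj
    obtain ⟨p, hp, hj⟩ := hj
    exact (mem_filter.1 hj).1
  have hKcard : K.card = ∑ p ∈ P, (if μ < p.2 then B - μ else m) := by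
    rw [hK]
    rw [Finset.card_biUnion]
    · apply Finset.sum_congr rfl
      intro p hp
      exact card_kill hm (hcell p hp).2.1 (le_trans (hcell p hp).2.2 (hmono p hp))
    · intro p hp q hq hne
      rw [Function.onFun, Finset.disjoint_filter]
      intro j hj h1 h2
      exact (hpair p hp q hq hne).2 (h1.symm.trans h2)
  have hcardRR : (RR m B P).card = B - K.card := by
    rw [hRR, Finset.card_sdiff_of_subset hKsub, Nat.card_Icc]
    omega
  set D := P.filter fun p => μ < p.2 with hD
  have hsum : K.card = D.card * (B - μ) + (k - D.card) * m := by
    rw [hKcard, Finset.sum_ite, Finset.sum_const, Finset.sum_const]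
    have hsplit := Finset.card_filter_add_card_filter_not
      (s := P) (p := fun p => μ < p.2)
    rw [← hD, hcard] at hsplit
    have hneg : (P.filter fun p => ¬ μ < p.2).card = k - D.card := by omega
    rw [hneg]
    simp [Nat.smul_one_eq_cast, smul_eq_mul]
    exact Or.inl rfl
  have hdk : D.card ≤ k := by
    rw [← hcard]; exact Finset.card_le_card (Finset.filter_subset _ _)
  have hKB : K.card ≤ B := by
    have := Finset.card_le_card hKsub
    rw [Nat.card_Icc] at this
    omega
  have hμB : μ ≤ B := mfloor_le
  have hKZ : (K.card : ℤ) = (D.card : ℤ) * ((B : ℤ) - μ) + ((k : ℤ) - D.card) * m := by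
    rw [hsum]
    push_cast [Nat.cast_sub hdk, Nat.cast_sub hμB]
    ring
  have hRZ : ((RR m B P).card : ℤ) = (B : ℤ) - K.card := by
    rw [hcardRR]
    push_cast [Nat.cast_sub hKB]
    ring
  rw [hRZ, hKZ]
  ring

end Aux3
section Aux4
open Finset

variable {m n k : ℕ} {b : ℕ → ℕ}

lemma mPl_filter_not_col :
    (mPl m (n + 1) b k).filter (fun P => ∀ p ∈ P, p.1 ≠ n) = mPl m n b k := by
  ext P
  simp only [mem_filter, mem_mPl]
  constructor
  · rintro ⟨⟨h1, h2, h3⟩, h4⟩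
    refine ⟨fun p hp => ⟨?_, (h1 p hp).2⟩, h2, h3⟩
    have := (h1 p hp).1
    have := h4 p hp
    omega
  · rintro ⟨h1, h2, h3⟩
    refine ⟨⟨fun p hp => ⟨?_, (h1 p hp).2⟩, h2, h3⟩, fun p hp => ?_⟩
    · have := (h1 p hp).1; omega
    · have := (h1 p hp).1; omega

lemma card_mPl_col (hm : 0 < m) (k : ℕ) :
    ((mPl m (n + 1) b (k + 1)).filter (fun P => ¬ ∀ p ∈ P, p.1 ≠ n)).card
      = ∑ P ∈ mPl m n b k, (RR m (b n) P).card := by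
  rw [← Finset.card_sigma]
  refine (Finset.card_bij (fun x _ => insert ((n : ℕ), x.2) x.1) ?_ ?_ ?_).symm
  · rintro ⟨P, j⟩ ha
    rw [Finset.mem_sigma] at ha
    obtain ⟨hP, hj⟩ := ha
    obtain ⟨hcell, hcard, hpair⟩ := mem_mPl.1 hP
    simp only [RR, mem_filter, mem_Icc] at hj
    obtain ⟨⟨hj1, hj2⟩, hjlev⟩ := hj
    have hnotin : ((n : ℕ), j) ∉ P := fun h => absurd (hcell _ h).1 (by simp)
    rw [mem_filter]
    constructor
    · rw [mem_mPl]
      refine ⟨?_, ?_, ?_⟩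
      · intro p hp
        rcases Finset.mem_insert.1 hp with rfl | hp'
        · exact ⟨by omega, hj1, hj2⟩
        · obtain ⟨a1, a2, a3⟩ := hcell p hp'
          exact ⟨by omega, a2, a3⟩
      · rw [Finset.card_insert_of_notMem hnotin, hcard]
      · intro p hp q hq hne
        rcases Finset.mem_insert.1 hp with rfl | hp' <;>
          rcases Finset.mem_insert.1 hq with rfl | hq'
        · exact absurd rfl hne
        · have hq1 : q.1 < n := (hcell q hq').1
          exact ⟨by simp; omega, hjlev q hq'⟩
        · have hp1 : p.1 < n := (hcell p hp').1
          exact ⟨by simp; omega, (hjlev p hp').symm⟩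
        · exact hpair p hp' q hq' hne
    · push_neg
      exact ⟨(n, j), Finset.mem_insert_self _ _, rfl⟩
  · rintro ⟨P, j⟩ h1 ⟨P', j'⟩ h2 heq
    rw [Finset.mem_sigma] at h1 h2
    obtain ⟨hP, hj⟩ := h1
    obtain ⟨hP', hj'⟩ := h2
    have hcol : ∀ p ∈ P, p.1 < n := fun p hp => ((mem_mPl.1 hP).1 p hp).1
    have hcol' : ∀ p ∈ P', p.1 < n := fun p hp => ((mem_mPl.1 hP').1 p hp).1
    have heq' : insert ((n : ℕ), j) P = insert ((n : ℕ), j') P' := heq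
    have hjj : j = j' := by
      have : ((n : ℕ), j) ∈ insert ((n : ℕ), j') P' := by
        rw [← heq']; exact Finset.mem_insert_self _ _
      rcases Finset.mem_insert.1 this with h | h
      · exact (Prod.ext_iff.1 h).2
      · exact absurd (hcol' _ h) (by simp)
    have hPP : P = P' := by
      ext x
      constructor
      · intro hx
        have : x ∈ insert ((n : ℕ), j') P' := by
          rw [← heq']; exact Finset.mem_insert_of_mem hx
        rcases Finset.mem_insert.1 this with rfl | h
        · exact absurd (hcol _ hx) (by simp)
        · exact h
      · intro hx
        have : x ∈ insert ((n : ℕ), j) P := by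
          rw [heq']; exact Finset.mem_insert_of_mem hx
        rcases Finset.mem_insert.1 this with rfl | h
        · exact absurd (hcol' _ hx) (by simp)
        · exact h
    subst hPP; subst hjj; rfl
  · intro P hP
    rw [mem_filter] at hP
    obtain ⟨hP, hex⟩ := hP
    push_neg at hex
    obtain ⟨p₀, hp₀, hcol⟩ := hex
    obtain ⟨hcell, hcard, hpair⟩ := mem_mPl.1 hP
    have hkey1 : P.erase p₀ ∈ mPl m n b k := by
      rw [mem_mPl]
      refine ⟨?_, ?_, ?_⟩
      · intro q hq
        have hqP := Finset.mem_of_mem_erase hq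
        have hqne := Finset.ne_of_mem_erase hq
        obtain ⟨a1, a2, a3⟩ := hcell q hqP
        refine ⟨?_, a2, a3⟩
        have : q.1 ≠ n := by
          intro h
          exact (hpair q hqP p₀ hp₀ hqne).1 (h.trans hcol.symm)
        omega
      · rw [Finset.card_erase_of_mem hp₀, hcard]
        omega
      · intro p hp q hq hne
        exact hpair p (Finset.mem_of_mem_erase hp) q (Finset.mem_of_mem_erase hq) hne
    have hkey2 : p₀.2 ∈ RR m (b n) (P.erase p₀) := by
      simp only [RR, mem_filter, mem_Icc]
      obtain ⟨a1, a2, a3⟩ := hcell p₀ hp₀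
      refine ⟨⟨a2, by rw [← hcol]; exact a3⟩, ?_⟩
      intro q hq
      exact (hpair p₀ hp₀ q (Finset.mem_of_mem_erase hq)
        (Finset.ne_of_mem_erase hq).symm).2
    refine ⟨⟨P.erase p₀, p₀.2⟩, Finset.mem_sigma.2 ⟨hkey1, hkey2⟩, ?_⟩
    have hpp : ((n : ℕ), p₀.2) = p₀ := by rw [← hcol]
    show insert ((n : ℕ), p₀.2) (P.erase p₀) = P
    rw [hpp, Finset.insert_erase hp₀]

lemma mPl_filter_le_floor (c : ℕ) :
    (mPl m n b k).filter (fun P => ∀ p ∈ P, p.2 ≤ c)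
      = mPl m n (fun i => min (b i) c) k := by
  ext P
  simp only [mem_filter, mem_mPl]
  constructor
  · rintro ⟨⟨h1, h2, h3⟩, h4⟩
    refine ⟨fun p hp => ?_, h2, h3⟩
    obtain ⟨a1, a2, a3⟩ := h1 p hp
    exact ⟨a1, a2, le_min a3 (h4 p hp)⟩
  · rintro ⟨h1, h2, h3⟩
    refine ⟨⟨fun p hp => ?_, h2, h3⟩, fun p hp => ?_⟩
    · obtain ⟨a1, a2, a3⟩ := h1 p hp
      exact ⟨a1, a2, le_trans a3 (min_le_left _ _)⟩
    · exact le_trans (h1 p hp).2.2 (min_le_right _ _)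

lemma rook_rec (hm : 0 < m) (hb : FerrersMono (n + 1) b) (k : ℕ) :
    (mLevelRookNum m (n + 1) b (k + 1) : ℤ) = (mLevelRookNum m n b (k + 1) : ℤ)
      + ((b n : ℤ) - m * k) * (mLevelRookNum m n b k : ℤ)
      + ((m : ℤ) - ((b n : ℤ) - (mfloor m (b n) : ℤ)))
        * ((mLevelRookNum m n b k : ℤ)
           - (mLevelRookNum m n (fun i => min (b i) (mfloor m (b n))) k : ℤ)) := by
  have hmono : ∀ P ∈ mPl m n b k, ∀ p ∈ P, b p.1 ≤ b n := by
    intro P hP p hp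
    exact ferrers_le hb (le_of_lt ((mem_mPl.1 hP).1 p hp).1) (by omega)
  have hsplit := Finset.card_filter_add_card_filter_not
    (s := mPl m (n + 1) b (k + 1)) (p := fun P => ∀ p ∈ P, p.1 ≠ n)
  rw [mPl_filter_not_col, card_mPl_col hm k] at hsplit
  have hcast : ((∑ P ∈ mPl m n b k, (RR m (b n) P).card : ℕ) : ℤ)
      = ∑ P ∈ mPl m n b k, (((b n : ℤ) - m * k)
          + ((m : ℤ) - ((b n : ℤ) - (mfloor m (b n) : ℤ)))
            * ((P.filter fun p => mfloor m (b n) < p.2).card : ℤ)) := by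
    push_cast
    apply Finset.sum_congr rfl
    intro P hP
    rw [card_RR hm hP (hmono P hP)]
  have hdsum : ∑ P ∈ mPl m n b k,
      (((P.filter fun p => mfloor m (b n) < p.2).card : ℤ))
      = (mLevelRookNum m n b k : ℤ)
        - (mLevelRookNum m n (fun i => min (b i) (mfloor m (b n))) k : ℤ) := by
    have hsplit2 := Finset.card_filter_add_card_filter_not
      (s := mPl m n b k) (p := fun P => ¬ ∀ p ∈ P, p.2 ≤ mfloor m (b n))
    have hpointwise : ∀ P ∈ mPl m n b k,
        (((P.filter fun p => mfloor m (b n) < p.2).card : ℤ))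
          = if ¬ ∀ p ∈ P, p.2 ≤ mfloor m (b n) then 1 else 0 := by
      intro P hP
      have hle := card_D_le_one hm hP (hmono P hP)
      by_cases hc : ∀ p ∈ P, p.2 ≤ mfloor m (b n)
      · rw [if_neg (not_not.2 hc)]
        have : (P.filter fun p => mfloor m (b n) < p.2) = ∅ := by
          rw [Finset.filter_eq_empty_iff]
          intro p hp
          push_neg
          exact hc p hp
        rw [this]; simp
      · rw [if_pos hc]
        push_neg at hc
        obtain ⟨p, hp, hgt⟩ := hc
        have hne : (P.filter fun p => mfloor m (b n) < p.2).Nonempty :=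
          ⟨p, Finset.mem_filter.2 ⟨hp, hgt⟩⟩
        have := Finset.card_pos.2 hne
        have : (P.filter fun p => mfloor m (b n) < p.2).card = 1 := by omega
        rw [this]; rfl
    rw [Finset.sum_congr rfl hpointwise, Finset.sum_ite, Finset.sum_const,
      Finset.sum_const]
    have hff : (mPl m n b k).filter
        (fun P => ¬¬ ∀ p ∈ P, p.2 ≤ mfloor m (b n))
        = mPl m n (fun i => min (b i) (mfloor m (b n))) k := by
      rw [← mPl_filter_le_floor]
      apply Finset.filter_congr
      intro P hP
      exact not_not
    rw [hff]
    have hc2 : ((mPl m n b k).filter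
        (fun P => ¬ ∀ p ∈ P, p.2 ≤ mfloor m (b n))).card
        = (mPl m n b k).card
          - (mPl m n (fun i => min (b i) (mfloor m (b n))) k).card := by
      rw [← hff]
      omega
    rw [hc2]
    have hle2 : (mPl m n (fun i => min (b i) (mfloor m (b n))) k).card
        ≤ (mPl m n b k).card := by
      rw [← hff]
      exact Finset.card_le_card (Finset.filter_subset _ _)
    simp only [nsmul_eq_mul, smul_eq_mul, mul_one, mul_zero, add_zero]
    rw [mLevelRookNum_eq_card, mLevelRookNum_eq_card]
    push_cast [Nat.cast_sub hle2]
    ring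
  rw [mLevelRookNum_eq_card, ← hsplit]
  push_cast [hcast]
  rw [Finset.sum_add_distrib, Finset.sum_const, ← Finset.mul_sum, hdsum]
  simp only [nsmul_eq_mul, mLevelRookNum_eq_card]
  push_cast
  ring

end Aux4
section Aux5
open Finset

variable {m n k : ℕ} {b : ℕ → ℕ}

/-- The m-level rook polynomial evaluated at x. -/
noncomputable def Lp (m n : ℕ) (b : ℕ → ℕ) (x : ℝ) : ℝ :=
  ∑ k ∈ Finset.range (n + 1), (mLevelRookNum m n b k : ℝ) * mfall x m (n - k)

lemma mfall_succ (x : ℝ) (m j : ℕ) :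
    mfall x m (j + 1) = mfall x m j * (x - m * j) := Finset.prod_range_succ _ _

lemma rook_zero : mLevelRookNum m n b 0 = 1 := by
  rw [mLevelRookNum_eq_card, mPl_zero, Finset.card_singleton]

lemma rook_top (h : n < k) : mLevelRookNum m n b k = 0 := by
  rw [mLevelRookNum_eq_card, mPl_eq_empty_of_lt h, Finset.card_empty]

lemma L_rec (hm : 0 < m) (hb : FerrersMono (n + 1) b) (x : ℝ) :
    Lp m (n + 1) b x
      = (x + (b n : ℝ) - m * n) * Lp m n b x
        + ((m : ℝ) - ((b n : ℝ) - (mfloor m (b n) : ℝ)))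
          * (Lp m n b x - Lp m n (fun i => min (b i) (mfloor m (b n))) x) := by
  set ρc : ℝ := (m : ℝ) - ((b n : ℝ) - (mfloor m (b n) : ℝ)) with hρ
  have hrec : ∀ k : ℕ, (mLevelRookNum m (n + 1) b (k + 1) : ℝ)
      = (mLevelRookNum m n b (k + 1) : ℝ)
        + ((b n : ℝ) - m * k) * (mLevelRookNum m n b k : ℝ)
        + ρc * ((mLevelRookNum m n b k : ℝ)
            - (mLevelRookNum m n (fun i => min (b i) (mfloor m (b n))) k : ℝ)) := by
    intro k
    rw [hρ]
    exact_mod_cast rook_rec hm hb k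
  have hS1 : (∑ k ∈ Finset.range (n + 1),
        (mLevelRookNum m n b (k + 1) : ℝ) * mfall x m (n - k)) + mfall x m (n + 1)
      = ∑ k ∈ Finset.range (n + 1), (mLevelRookNum m n b k : ℝ)
          * (mfall x m (n - k) * (x - m * ((n - k : ℕ) : ℝ))) := by
    have hR : ∀ k ∈ Finset.range (n + 1),
        (mLevelRookNum m n b k : ℝ) * (mfall x m (n - k) * (x - m * ((n - k : ℕ) : ℝ)))
          = (mLevelRookNum m n b k : ℝ) * mfall x m (n + 1 - k) := by
      intro k hk
      rw [Finset.mem_range] at hk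
      have h2 : n + 1 - k = (n - k) + 1 := by omega
      rw [h2, mfall_succ]
    rw [Finset.sum_congr rfl hR]
    conv_rhs => rw [Finset.sum_range_succ'
      (fun k => (mLevelRookNum m n b k : ℝ) * mfall x m (n + 1 - k)) n]
    conv_lhs => rw [Finset.sum_range_succ]
    simp only [Nat.succ_sub_succ, Nat.sub_zero, Nat.sub_self,
      rook_zero, rook_top (Nat.lt_succ_self n), Nat.cast_one, Nat.cast_zero,
      one_mul, zero_mul]
    ring
  unfold Lp
  rw [Finset.sum_range_succ' _ (n + 1)]
  have hsub : ∀ k : ℕ, n + 1 - (k + 1) = n - k := fun k => by omega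
  simp only [hsub, Nat.sub_zero, rook_zero, Nat.cast_one, one_mul]
  have hpoint : ∀ k ∈ Finset.range (n + 1),
      (mLevelRookNum m (n + 1) b (k + 1) : ℝ) * mfall x m (n - k)
        = (mLevelRookNum m n b (k + 1) : ℝ) * mfall x m (n - k)
          + (((b n : ℝ) - m * k) * (mLevelRookNum m n b k : ℝ)) * mfall x m (n - k)
          + (ρc * ((mLevelRookNum m n b k : ℝ)
              - (mLevelRookNum m n (fun i => min (b i) (mfloor m (b n))) k : ℝ)))
            * mfall x m (n - k) := by
    intro k _
    rw [hrec k]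
    ring
  rw [Finset.sum_congr rfl hpoint, Finset.sum_add_distrib, Finset.sum_add_distrib]
  have hRHS : (x + (b n : ℝ) - m * n)
      * ∑ k ∈ Finset.range (n + 1), (mLevelRookNum m n b k : ℝ) * mfall x m (n - k)
      = (∑ k ∈ Finset.range (n + 1), (mLevelRookNum m n b k : ℝ)
          * (mfall x m (n - k) * (x - m * ((n - k : ℕ) : ℝ))))
        + ∑ k ∈ Finset.range (n + 1),
            (((b n : ℝ) - m * k) * (mLevelRookNum m n b k : ℝ)) * mfall x m (n - k) := by
    rw [Finset.mul_sum, ← Finset.sum_add_distrib]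
    apply Finset.sum_congr rfl
    intro k hk
    rw [Finset.mem_range] at hk
    have hc : ((n - k : ℕ) : ℝ) = (n : ℝ) - (k : ℝ) := by
      push_cast [Nat.cast_sub (by omega : k ≤ n)]
      ring
    rw [hc]
    ring
  have hS3 : ∑ k ∈ Finset.range (n + 1),
      (ρc * ((mLevelRookNum m n b k : ℝ)
          - (mLevelRookNum m n (fun i => min (b i) (mfloor m (b n))) k : ℝ)))
        * mfall x m (n - k)
      = ρc * ((∑ k ∈ Finset.range (n + 1),
            (mLevelRookNum m n b k : ℝ) * mfall x m (n - k))
          - ∑ k ∈ Finset.range (n + 1),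
            (mLevelRookNum m n (fun i => min (b i) (mfloor m (b n))) k : ℝ)
              * mfall x m (n - k)) := by
    rw [← Finset.sum_sub_distrib, Finset.mul_sum]
    apply Finset.sum_congr rfl
    intro k _
    ring
  rw [hRHS, ← hS3]
  linear_combination hS1
end Aux5
section Aux6
open Finset

variable {m n k : ℕ} {b : ℕ → ℕ} {x : ℝ}

lemma mfloor_mfloor (hm : 0 < m) (c : ℕ) : mfloor m (mfloor m c) = mfloor m c := by
  unfold mfloor
  rw [Nat.mul_div_cancel_left _ hm]

lemma mfloor_add_m_le {c d : ℕ} (h : mfloor m c < mfloor m d) :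
    mfloor m c + m ≤ mfloor m d := mul_succ_le_of_lt h

lemma trunc_eq_of_floor_lt (hm : 0 < m) {c d : ℕ} (h : mfloor m c < mfloor m d) :
    min c (mfloor m d) = c := by
  have h1 : c < mfloor m c + m := lt_mfloor_add hm
  have h2 := mfloor_add_m_le h
  exact min_eq_left (by omega)

lemma trunc_eq_of_floor_eq {c d : ℕ} (h : mfloor m c = mfloor m d) :
    min c (mfloor m d) = mfloor m d := min_eq_right (h ▸ mfloor_le)

lemma mfloor_trunc (hm : 0 < m) {c d : ℕ} (h : mfloor m c ≤ mfloor m d) :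
    mfloor m (min c (mfloor m d)) = mfloor m c := by
  rcases lt_or_eq_of_le h with hlt | heq
  · rw [trunc_eq_of_floor_lt hm hlt]
  · rw [trunc_eq_of_floor_eq heq, mfloor_mfloor hm, heq]

lemma Lp_congr {b' : ℕ → ℕ} (h : ∀ i < n, b i = b' i) : Lp m n b x = Lp m n b' x := by
  unfold Lp
  apply Finset.sum_congr rfl
  intro k _
  rw [mLevelRookNum_eq_card, mLevelRookNum_eq_card, mPl_congr h]

/-- The factor of column `i` in the zone product for an `n`-column board. -/
noncomputable def cfac (x : ℝ) (m n : ℕ) (b : ℕ → ℕ) (i : ℕ) : ℝ :=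
  if i + 1 = n ∨ mfloor m (b (i + 1)) ≠ mfloor m (b i) then
    x + (mfloor m (b i) : ℝ) - (m : ℝ) * (i : ℝ) +
      ∑ k ∈ (Finset.range n).filter fun k => mfloor m (b k) = mfloor m (b i),
        ((b k : ℝ) - (mfloor m (b k) : ℝ))
  else
    x + (mfloor m (b i) : ℝ) - (m : ℝ) * (i : ℝ)

lemma mfloor_b_mono (hb : FerrersMono n b) {i j : ℕ} (hij : i ≤ j) (hj : j < n) :
    mfloor m (b i) ≤ mfloor m (b j) := mfloor_mono (ferrers_le hb hij hj)

lemma filter_floor_stable (hb : FerrersMono (n + 1) b) {i : ℕ} (hi : i < n)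
    (hne : mfloor m (b i) ≠ mfloor m (b n)) :
    ((Finset.range (n + 1)).filter fun k => mfloor m (b k) = mfloor m (b i))
      = (Finset.range n).filter fun k => mfloor m (b k) = mfloor m (b i) := by
  rw [Finset.range_add_one, Finset.filter_insert, if_neg (fun h => hne h.symm)]

lemma cfac_prev (hb : FerrersMono (n + 1) b) {i : ℕ} (hi : i < n)
    (h : i + 1 < n ∨ mfloor m (b (i + 1)) ≠ mfloor m (b i)) :
    cfac x m (n + 1) b i = cfac x m n b i := by
  unfold cfac
  by_cases hC : mfloor m (b (i + 1)) ≠ mfloor m (b i)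
  · rw [if_pos (Or.inr hC), if_pos (Or.inr hC)]
    have hlt : mfloor m (b i) < mfloor m (b (i + 1)) :=
      lt_of_le_of_ne (mfloor_b_mono hb (Nat.le_succ i) (by omega)) (Ne.symm hC)
    have hne : mfloor m (b i) ≠ mfloor m (b n) := by
      have := mfloor_b_mono (m := m) hb (show i + 1 ≤ n by omega) (by omega)
      omega
    rw [filter_floor_stable hb hi hne]
  · have h' : i + 1 < n := by tauto
    rw [if_neg (by push_neg; exact ⟨by omega, not_not.1 hC⟩),
        if_neg (by push_neg; exact ⟨by omega, not_not.1 hC⟩)]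

lemma cfac_trunc (hm : 0 < m) (hb : FerrersMono (n + 1) b) {i : ℕ} (hi : i + 1 < n) :
    cfac x m n (fun j => min (b j) (mfloor m (b n))) i = cfac x m n b i := by
  have hfl : ∀ k, k ≤ n → mfloor m (min (b k) (mfloor m (b n))) = mfloor m (b k) :=
    fun k hk => mfloor_trunc hm (mfloor_b_mono hb hk (by omega))
  unfold cfac
  simp only [hfl i (by omega), hfl (i + 1) (by omega)]
  by_cases hC : i + 1 = n ∨ mfloor m (b (i + 1)) ≠ mfloor m (b i)
  · rw [if_pos hC, if_pos hC]
    have hC' : mfloor m (b (i + 1)) ≠ mfloor m (b i) := by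
      rcases hC with h1 | h2
      · omega
      · exact h2
    have hlt : mfloor m (b i) < mfloor m (b n) := by
      have h1 : mfloor m (b i) ≤ mfloor m (b (i + 1)) :=
        mfloor_b_mono hb (Nat.le_succ i) (by omega)
      have h2 : mfloor m (b (i + 1)) ≤ mfloor m (b n) :=
        mfloor_b_mono hb (by omega) (by omega)
      omega
    have hfilter : ((Finset.range n).filter
          fun k => mfloor m (min (b k) (mfloor m (b n))) = mfloor m (b i))
        = (Finset.range n).filter fun k => mfloor m (b k) = mfloor m (b i) := by
      apply Finset.filter_congr
      intro k hk
      rw [Finset.mem_range] at hk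
      rw [hfl k (by omega)]
    rw [hfilter]
    congr 1
    apply Finset.sum_congr rfl
    intro k hk
    rw [Finset.mem_filter, Finset.mem_range] at hk
    have hkfl : mfloor m (b k) < mfloor m (b n) := by
      have := hk.2
      omega
    rw [hfl k (by omega), trunc_eq_of_floor_lt hm hkfl]
  · rw [if_neg hC, if_neg hC]

end Aux6
section Main
open Finset

variable {m : ℕ}

theorem L_eq_prod (hm : 0 < m) (x : ℝ) :
    ∀ n (b : ℕ → ℕ), FerrersMono n b →
      Lp m n b x = ∏ i ∈ Finset.range n, cfac x m n b i := by
  intro n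
  induction n with
  | zero =>
    intro b _
    simp [Lp, rook_zero, mfall]
  | succ n ih =>
    intro b hb
    have hb' : FerrersMono n b := fun i h => hb i (by omega)
    have hb'' : FerrersMono n (fun j => min (b j) (mfloor m (b n))) :=
      fun i h => min_le_min (hb i (by omega)) le_rfl
    rw [L_rec hm hb x]
    rcases Nat.eq_zero_or_pos n with rfl | hn
    · -- single column
      have h0 : ∀ c : ℕ → ℕ, Lp m 0 c x = 1 := by
        intro c
        simp [Lp, rook_zero, mfall]
      rw [h0, h0, Finset.prod_range_one]
      unfold cfac
      rw [if_pos (Or.inl rfl)]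
      have hfil : ((Finset.range 1).filter
          fun k => mfloor m (b k) = mfloor m (b 0)) = {0} := by
        ext k
        simp only [mem_filter, mem_range, mem_singleton]
        constructor
        · rintro ⟨hk, -⟩; omega
        · rintro rfl; exact ⟨by omega, rfl⟩
      rw [hfil, Finset.sum_singleton]
      have hle : (mfloor m (b 0) : ℝ) ≤ (b 0 : ℝ) := by exact_mod_cast mfloor_le
      push_cast
      ring
    · obtain ⟨n', rfl⟩ : ∃ n'', n = n'' + 1 := ⟨n - 1, by omega⟩
      by_cases hG : mfloor m (b n') = mfloor m (b (n' + 1))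
      · -- Case B : last two columns in the same zone
        rw [ih b hb', ih _ hb'']
        -- split all products
        rw [Finset.prod_range_succ (fun i => cfac x m (n' + 2) b i) (n' + 1),
          Finset.prod_range_succ (fun i => cfac x m (n' + 2) b i) n',
          Finset.prod_range_succ (fun i => cfac x m (n' + 1) b i) n',
          Finset.prod_range_succ
            (fun i => cfac x m (n' + 1) (fun j => min (b j) (mfloor m (b (n' + 1)))) i) n']
        have hprev : ∀ i ∈ Finset.range n',
            cfac x m (n' + 2) b i = cfac x m (n' + 1) b i := by
          intro i hi
          rw [Finset.mem_range] at hi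
          exact cfac_prev hb (by omega) (Or.inl (by omega))
        have htr : ∀ i ∈ Finset.range n',
            cfac x m (n' + 1) (fun j => min (b j) (mfloor m (b (n' + 1)))) i
              = cfac x m (n' + 1) b i := by
          intro i hi
          rw [Finset.mem_range] at hi
          exact cfac_trunc hm hb (by omega)
        rw [Finset.prod_congr rfl hprev, Finset.prod_congr rfl htr]
        set C : ℝ := ∏ i ∈ Finset.range n', cfac x m (n' + 1) b i with hC
        -- middle factors
        have hmid1 : cfac x m (n' + 2) b n'
            = x + (mfloor m (b (n' + 1)) : ℝ) - (m : ℝ) * (n' : ℝ) := by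
          unfold cfac
          rw [if_neg (by push_neg; exact ⟨by omega, hG.symm⟩), hG]
        have hmid2 : cfac x m (n' + 1) b n'
            = x + (mfloor m (b (n' + 1)) : ℝ) - (m : ℝ) * (n' : ℝ)
              + ∑ k ∈ (Finset.range (n' + 1)).filter
                  (fun k => mfloor m (b k) = mfloor m (b (n' + 1))),
                  ((b k : ℝ) - (mfloor m (b k) : ℝ)) := by
          unfold cfac
          rw [if_pos (Or.inl rfl), hG]
        have hmid3 : cfac x m (n' + 1) (fun j => min (b j) (mfloor m (b (n' + 1)))) n'
            = x + (mfloor m (b (n' + 1)) : ℝ) - (m : ℝ) * (n' : ℝ) := by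
          unfold cfac
          rw [if_pos (Or.inl rfl)]
          beta_reduce
          have hfl : mfloor m (min (b n') (mfloor m (b (n' + 1))))
              = mfloor m (b (n' + 1)) := by
            rw [mfloor_trunc hm (le_of_eq hG), hG]
          rw [hfl, add_eq_left]
          apply Finset.sum_eq_zero
          intro k hk
          simp only [Finset.mem_filter, Finset.mem_range] at hk
          obtain ⟨hk1, hk2⟩ := hk
          beta_reduce
          have hfk : mfloor m (b k) ≤ mfloor m (b (n' + 1)) :=
            mfloor_b_mono hb (by omega) (by omega)
          rw [mfloor_trunc hm hfk] at hk2
          have e1 : min (b k) (mfloor m (b (n' + 1))) = mfloor m (b (n' + 1)) :=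
            trunc_eq_of_floor_eq hk2
          rw [e1, mfloor_mfloor hm, sub_self]
        have hlast : cfac x m (n' + 2) b (n' + 1)
            = x + (mfloor m (b (n' + 1)) : ℝ) - (m : ℝ) * ((n' : ℝ) + 1)
              + (∑ k ∈ (Finset.range (n' + 1)).filter
                  (fun k => mfloor m (b k) = mfloor m (b (n' + 1))),
                  ((b k : ℝ) - (mfloor m (b k) : ℝ))
                + ((b (n' + 1) : ℝ) - (mfloor m (b (n' + 1)) : ℝ))) := by
          unfold cfac
          rw [if_pos (Or.inl rfl)]
          rw [Finset.range_add_one, Finset.filter_insert, if_pos rfl,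
            Finset.sum_insert (fun h => by
              have := (Finset.mem_filter.1 h).1
              simp at this)]
          push_cast
          ring
        rw [hmid1, hmid2, hmid3, hlast]
        push_cast
        ring
      · -- Case A : new zone starts at the last column
        have hlt : mfloor m (b n') < mfloor m (b (n' + 1)) :=
          lt_of_le_of_ne (mfloor_b_mono hb (by omega) (by omega)) hG
        have hmin : ∀ i < n' + 1, b i = min (b i) (mfloor m (b (n' + 1))) := by
          intro i hi
          have : mfloor m (b i) < mfloor m (b (n' + 1)) :=
            lt_of_le_of_lt (mfloor_b_mono hb (by omega) (by omega)) hlt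
          exact (trunc_eq_of_floor_lt hm this).symm
        rw [← Lp_congr hmin]
        rw [ih b hb']
        have hprev : ∀ i ∈ Finset.range (n' + 1),
            cfac x m (n' + 2) b i = cfac x m (n' + 1) b i := by
          intro i hi
          rw [Finset.mem_range] at hi
          rcases Nat.lt_or_ge i n' with h | h
          · exact cfac_prev hb (by omega) (Or.inl (by omega))
          · have : i = n' := by omega
            subst this
            exact cfac_prev hb (by omega) (Or.inr (fun hh => hG hh.symm))
        have hlast : cfac x m (n' + 2) b (n' + 1)
            = x + (b (n' + 1) : ℝ) - (m : ℝ) * ((n' : ℝ) + 1) := by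
          unfold cfac
          rw [if_pos (Or.inl rfl)]
          have hfil : ((Finset.range (n' + 2)).filter
              fun k => mfloor m (b k) = mfloor m (b (n' + 1))) = {n' + 1} := by
            ext k
            simp only [mem_filter, mem_range, mem_singleton]
            constructor
            · rintro ⟨hk, heq⟩
              by_contra hne
              have : mfloor m (b k) ≤ mfloor m (b n') :=
                mfloor_b_mono hb (by omega) (by omega)
              omega
            · rintro rfl; exact ⟨by omega, rfl⟩
          rw [hfil, Finset.sum_singleton]
          have hle : (mfloor m (b (n' + 1)) : ℝ) ≤ (b (n' + 1) : ℝ) := by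
            exact_mod_cast mfloor_le
          push_cast
          ring
        rw [Finset.prod_range_succ (fun i => cfac x m (n' + 2) b i) (n' + 1)]
        rw [Finset.prod_congr rfl hprev, hlast]
        push_cast
        ring

end Main
/-- zone factorization.  For a Ferrers board `B = (b_1, …, b_n)`,
`p_m(B,x) = ∏_{i=1}^n c_i`, where `c_i = x + ⌊b_i⌋_m - (i-1)m + ρ_z` if `i` is the
last index of its zone `z`, and `c_i = x + ⌊b_i⌋_m - (i-1)m` otherwise.  Here (since the
column heights are weakly increasing) the zone of a column `i` is the set of columns with
the same `m`-floor, `i` is last in its zone iff `i` is the last column or the `m`-floor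
strictly increases at the next column, and `ρ_z` is the sum over the zone of the
remainders `ρ_k = b_k - ⌊b_k⌋_m`. -/
theorem statement2 (m : ℕ) (hm : 0 < m) (n : ℕ) (b : ℕ → ℕ)
    (hb : FerrersMono n b) (x : ℝ) :
    ∑ k ∈ Finset.range (n + 1), (mLevelRookNum m n b k : ℝ) * mfall x m (n - k) =
      ∏ i ∈ Finset.range n,
        (if i + 1 = n ∨ mfloor m (b (i + 1)) ≠ mfloor m (b i) then
          x + (mfloor m (b i) : ℝ) - (m : ℝ) * (i : ℝ) +
            ∑ k ∈ (Finset.range n).filter fun k => mfloor m (b k) = mfloor m (b i),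
              ((b k : ℝ) - (mfloor m (b k) : ℝ))
        else
          x + (mfloor m (b i) : ℝ) - (m : ℝ) * (i : ℝ)) := by
  have h := L_eq_prod hm x n b hb
  refine h.trans (Finset.prod_congr rfl (fun i _ => ?_))
  unfold cfac
  rfl
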